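/- Let B : ℝ³ → ℝ³ be a continuous magnetic field of medium decay satisfying |B(x)| ≤ C(1+|x|)^{−μ} for all x, with μ > 3/2. Define the transversal gauge vector potential A(x) := −x × ∫₀¹ s·B(s·x) ds. Then A is continuous, x·A(x) = 0 for all x, and there is a constant C′ such that for |x| ≥ 2: |A(x)| ≤ C′|x|^{−1} if μ > 2, |A(x)| ≤ C′|x|^{−1}·log|x| if μ = 2, and |A(x)| ≤ C′|x|^{−(μ−1)} if 3/2 < μ < 2. In particular A is a vector potential of medium range. -/

import Mathlib

open MeasureTheory Filter Topology
open scoped ENNReal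

noncomputable section

abbrev E3 := EuclideanSpace ℝ (Fin 3)

/-- Euclidean dot product on `ℝ³`. -/
def dot3 (a b : E3) : ℝ := @inner ℝ _ _ a b

/-- Cross product on `ℝ³`. -/
def cross3 (a b : E3) : E3 :=
  WithLp.toLp 2 ![a 1 * b 2 - a 2 * b 1, a 2 * b 0 - a 0 * b 2, a 0 * b 1 - a 1 * b 0]

/-- `∂ᵢ fₖ (x)` for a map `f : ℝ³ → ℝ³`. -/
def pderiv3 (f : E3 → E3) (i k : Fin 3) (x : E3) : ℝ :=
  fderiv ℝ f x (EuclideanSpace.single i 1) k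

/-- Pointwise (classical) curl of a map `ℝ³ → ℝ³`. -/
def curl3 (f : E3 → E3) (x : E3) : E3 :=
  WithLp.toLp 2 ![pderiv3 f 1 2 x - pderiv3 f 2 1 x,
    pderiv3 f 2 0 x - pderiv3 f 0 2 x,
    pderiv3 f 0 1 x - pderiv3 f 1 0 x]

/-- The longitudinal component of `A` decays integrably:
`∫₀^∞ sup { |A(x)·x|/|x| : |x| ≥ r } dr < ∞`. -/
def LongitudinalIntegrableDecay (A : E3 → E3) : Prop :=
  (∫⁻ r in Set.Ioi (0:ℝ),
    ⨆ x ∈ {x : E3 | r ≤ ‖x‖}, ENNReal.ofReal (|dot3 (A x) x| / ‖x‖)) < ⊤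

/-- A vector potential of medium range. -/
def IsMediumRange (A : E3 → E3) : Prop :=
  Continuous A ∧
  (∃ C > (0:ℝ), ∃ μ : ℝ, 1/2 < μ ∧ ∃ R : ℝ, ∀ x : E3, R ≤ ‖x‖ → ‖A x‖ ≤ C * ‖x‖ ^ (-μ)) ∧
  LongitudinalIntegrableDecay A

/-- `div B = 0` in the sense of tempered distributions. -/
def DivFreeS' (B : E3 → E3) : Prop :=
  ∀ φ : SchwartzMap E3 ℝ, ∫ x, fderiv ℝ (⇑φ) x (B x) = 0

/-- A magnetic field of medium decay on `ℝ³`. -/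
def IsMediumDecay (B : E3 → E3) : Prop :=
  (∃ p : ℝ, 3 < p ∧ MemLp B (ENNReal.ofReal p) volume) ∧
  (∃ C > (0:ℝ), ∃ μ : ℝ, 3/2 < μ ∧ ∃ R : ℝ, ∀ x : E3, R ≤ ‖x‖ → ‖B x‖ ≤ C * ‖x‖ ^ (-μ)) ∧
  DivFreeS' B

/-- `curl A = B` in the sense of tempered distributions. -/
def CurlEqS' (A B : E3 → E3) : Prop :=
  ∀ φ : SchwartzMap E3 E3, (∫ x, dot3 (A x) (curl3 (⇑φ) x)) = ∫ x, dot3 (B x) (φ x)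

/-- The transversal gauge vector potential. -/
def transversalGauge (B : E3 → E3) : E3 → E3 :=
  fun x => -cross3 x (∫ s in (0:ℝ)..1, s • B (s • x))

/-! ### Auxiliary lemmas -/

lemma coord_le_norm (a : E3) (i : Fin 3) : |a i| ≤ ‖a‖ := by
  rw [EuclideanSpace.norm_eq]
  have h1 : |a i| = Real.sqrt ((a i)^2) := by rw [Real.sqrt_sq_eq_abs]
  rw [h1]
  apply Real.sqrt_le_sqrt
  calc (a i)^2 = ‖a i‖^2 := by rw [Real.norm_eq_abs, sq_abs]
  _ ≤ ∑ j, ‖a j‖^2 := Finset.single_le_sum (f := fun j => ‖a j‖^2)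
      (fun j _ => sq_nonneg _) (Finset.mem_univ i)

lemma dot3_comm (a b : E3) : dot3 a b = dot3 b a := (real_inner_comm b a)

lemma dot3_cross (a b : E3) : dot3 a (cross3 a b) = 0 := by
  simp only [dot3, cross3, PiLp.inner_apply, RCLike.inner_apply, conj_trivial,
    Fin.sum_univ_three]
  show (a 1 * b 2 - a 2 * b 1) * a 0 + (a 2 * b 0 - a 0 * b 2) * a 1
      + (a 0 * b 1 - a 1 * b 0) * a 2 = 0
  ring

lemma cross3_norm_le (a b : E3) : ‖cross3 a b‖ ≤ 4 * (‖a‖ * ‖b‖) := by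
  have ha : ∀ i, |a i| ≤ ‖a‖ := coord_le_norm a
  have hb : ∀ i, |b i| ≤ ‖b‖ := coord_le_norm b
  have hM : (0:ℝ) ≤ ‖a‖ * ‖b‖ := by positivity
  have hcomp : ∀ i j k l : Fin 3, |a i * b j - a k * b l| ≤ 2 * (‖a‖ * ‖b‖) := by
    intro i j k l
    have h1 : |a i * b j| ≤ ‖a‖ * ‖b‖ := by
      rw [abs_mul]; exact mul_le_mul (ha i) (hb j) (abs_nonneg _) (norm_nonneg _)
    have h2 : |a k * b l| ≤ ‖a‖ * ‖b‖ := by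
      rw [abs_mul]; exact mul_le_mul (ha k) (hb l) (abs_nonneg _) (norm_nonneg _)
    calc |a i * b j - a k * b l| ≤ |a i * b j| + |a k * b l| := abs_sub _ _
      _ ≤ 2 * (‖a‖ * ‖b‖) := by linarith
  rw [EuclideanSpace.norm_eq]
  have h3 : Real.sqrt (∑ i, ‖(cross3 a b) i‖^2) ≤ Real.sqrt (3 * (2 * (‖a‖ * ‖b‖))^2) := by
    apply Real.sqrt_le_sqrt
    rw [Fin.sum_univ_three]
    have e0 := hcomp 1 2 2 1
    have e1 := hcomp 2 0 0 2
    have e2 := hcomp 0 1 1 0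
    have n0 : ‖(cross3 a b) 0‖ = |a 1 * b 2 - a 2 * b 1| := rfl
    have n1 : ‖(cross3 a b) 1‖ = |a 2 * b 0 - a 0 * b 2| := rfl
    have n2 : ‖(cross3 a b) 2‖ = |a 0 * b 1 - a 1 * b 0| := rfl
    rw [n0, n1, n2]
    nlinarith [abs_nonneg (a 1 * b 2 - a 2 * b 1), abs_nonneg (a 2 * b 0 - a 0 * b 2),
      abs_nonneg (a 0 * b 1 - a 1 * b 0)]
  refine h3.trans ?_
  have h4 : (3 : ℝ) * (2 * (‖a‖ * ‖b‖))^2 ≤ (4 * (‖a‖ * ‖b‖))^2 := by nlinarith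
  calc Real.sqrt (3 * (2 * (‖a‖ * ‖b‖))^2) ≤ Real.sqrt ((4 * (‖a‖ * ‖b‖))^2) :=
        Real.sqrt_le_sqrt h4
    _ = 4 * (‖a‖ * ‖b‖) := Real.sqrt_sq (by positivity)

lemma cross3_continuous {X : Type*} [TopologicalSpace X] {f g : X → E3}
    (hf : Continuous f) (hg : Continuous g) : Continuous fun x => cross3 (f x) (g x) := by
  have hfi : ∀ i, Continuous fun x => f x i := fun i => (continuous_apply i).comp ((PiLp.continuous_ofLp 2 _).comp hf)
  have hgi : ∀ i, Continuous fun x => g x i := fun i => (continuous_apply i).comp ((PiLp.continuous_ofLp 2 _).comp hg)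
  apply (PiLp.continuous_toLp 2 _).comp
  apply continuous_pi
  intro i
  fin_cases i
  · exact ((hfi 1).mul (hgi 2)).sub ((hfi 2).mul (hgi 1))
  · exact ((hfi 2).mul (hgi 0)).sub ((hfi 0).mul (hgi 2))
  · exact ((hfi 0).mul (hgi 1)).sub ((hfi 1).mul (hgi 0))

lemma contOn_pow (r ν : ℝ) (hr : 0 ≤ r) :
    ContinuousOn (fun s : ℝ => (1 + s * r) ^ ν) (Set.uIcc 0 1) := by
  apply ContinuousOn.rpow_const
  · fun_prop
  · intro s hs
    left
    rw [Set.uIcc_of_le (by norm_num : (0:ℝ) ≤ 1)] at hs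
    nlinarith [hs.1]

lemma intInt_pow (r ν : ℝ) (hr : 0 ≤ r) :
    IntervalIntegrable (fun s : ℝ => (1 + s * r) ^ ν) volume 0 1 :=
  (contOn_pow r ν hr).intervalIntegrable

lemma J_eq (r μ : ℝ) (hr : 0 < r) (hμ : μ ≠ 2) :
    ∫ s in (0:ℝ)..1, (1 + s * r) ^ (1 - μ)
      = ((1 + r) ^ (2 - μ) - 1) / ((2 - μ) * r) := by
  have hder : ∀ s ∈ Set.uIcc (0:ℝ) 1,
      HasDerivAt (fun s : ℝ => (1 + s * r) ^ (2 - μ) / ((2 - μ) * r))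
        ((1 + s * r) ^ (1 - μ)) s := by
    intro s hs
    rw [Set.uIcc_of_le (by norm_num : (0:ℝ) ≤ 1)] at hs
    have hpos : 0 < 1 + s * r := by nlinarith [hs.1]
    have h1 : HasDerivAt (fun s : ℝ => 1 + s * r) r s := by
      simpa [mul_comm] using ((hasDerivAt_id s).const_mul r).const_add 1
    have h2 := h1.rpow_const (p := 2 - μ) (Or.inl hpos.ne')
    have h3 := h2.div_const ((2 - μ) * r)
    refine h3.congr_deriv ?_
    have hne : (2 - μ) * r ≠ 0 := by
      apply mul_ne_zero _ hr.ne'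
      intro h; apply hμ; linarith
    field_simp
    rw [show (2 : ℝ) - μ - 1 = 1 - μ by ring]
  rw [intervalIntegral.integral_eq_sub_of_hasDerivAt hder (intInt_pow r (1-μ) hr.le)]
  have hne : (2 - μ) * r ≠ 0 := by
    apply mul_ne_zero _ hr.ne'
    intro h; apply hμ; linarith
  field_simp
  simp

lemma J_eq2 (r : ℝ) (hr : 0 < r) :
    ∫ s in (0:ℝ)..1, (1 + s * r) ^ (1 - (2:ℝ)) = Real.log (1 + r) / r := by
  have hder : ∀ s ∈ Set.uIcc (0:ℝ) 1,
      HasDerivAt (fun s : ℝ => Real.log (1 + s * r) / r)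
        ((1 + s * r) ^ (1 - (2:ℝ))) s := by
    intro s hs
    rw [Set.uIcc_of_le (by norm_num : (0:ℝ) ≤ 1)] at hs
    have hpos : 0 < 1 + s * r := by nlinarith [hs.1]
    have h1 : HasDerivAt (fun s : ℝ => 1 + s * r) r s := by
      simpa [mul_comm] using ((hasDerivAt_id s).const_mul r).const_add 1
    have h2 := (h1.log hpos.ne').div_const r
    refine h2.congr_deriv ?_
    rw [show (1:ℝ) - 2 = -1 by norm_num, Real.rpow_neg_one]
    field_simp
  rw [intervalIntegral.integral_eq_sub_of_hasDerivAt hder (intInt_pow r (1-2) hr.le)]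
  simp

lemma J_le (r μ : ℝ) (hμ : 3/2 < μ) (hr : 2 ≤ r) :
    (2 < μ → (∫ s in (0:ℝ)..1, (1 + s * r) ^ (1 - μ)) ≤ (μ-2)⁻¹ * r⁻¹) ∧
    (μ = 2 → (∫ s in (0:ℝ)..1, (1 + s * r) ^ (1 - μ)) ≤ 2 * r⁻¹ * Real.log r) ∧
    (μ < 2 → (∫ s in (0:ℝ)..1, (1 + s * r) ^ (1 - μ)) ≤ (2/(2-μ)) * r ^ (-(μ-1))) := by
  have hr0 : (0:ℝ) < r := by linarith
  refine ⟨?_, ?_, ?_⟩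
  · intro h2
    rw [J_eq r μ hr0 (by linarith)]
    have hp : 0 < (1 + r) ^ (2 - μ) := Real.rpow_pos_of_pos (by linarith) _
    have hle1 : (1 + r) ^ (2 - μ) ≤ 1 :=
      Real.rpow_le_one_of_one_le_of_nonpos (by linarith) (by linarith)
    rw [div_le_iff_of_neg (by nlinarith : (2-μ)*r < 0)]
    have he : (μ-2)⁻¹ * r⁻¹ * ((2-μ)*r) = -1 := by
      have h1 : μ - 2 ≠ 0 := by linarith
      field_simp
      ring
    nlinarith [hp]
  · intro h2
    subst h2
    rw [J_eq2 r hr0]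
    have hlog : Real.log (1 + r) ≤ 2 * Real.log r := by
      have : (1:ℝ) + r ≤ r ^ 2 := by nlinarith
      calc Real.log (1 + r) ≤ Real.log (r ^ 2) := Real.log_le_log (by linarith) this
        _ = 2 * Real.log r := by rw [Real.log_pow]; norm_num
    rw [div_le_iff₀ hr0]
    calc Real.log (1 + r) ≤ 2 * Real.log r := hlog
      _ = 2 * r⁻¹ * Real.log r * r := by field_simp
  · intro h2
    rw [J_eq r μ hr0 (by linarith)]
    have h2μ : (0:ℝ) < 2 - μ := by linarith
    have hb : (1 + r) ^ (2 - μ) ≤ 2 * r ^ (2 - μ) := by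
      calc (1 + r) ^ (2 - μ) ≤ (2*r) ^ (2 - μ) :=
            Real.rpow_le_rpow (by linarith) (by linarith) h2μ.le
        _ = 2 ^ (2-μ) * r ^ (2-μ) := Real.mul_rpow (by norm_num) hr0.le
        _ ≤ 2 * r ^ (2-μ) := by
            have h5 : (2:ℝ) ^ (2-μ) ≤ 2 ^ (1:ℝ) :=
              Real.rpow_le_rpow_of_exponent_le one_le_two (by linarith)
            have hrp : (0:ℝ) ≤ r ^ (2-μ) := (Real.rpow_pos_of_pos hr0 _).le
            rw [Real.rpow_one] at h5
            exact mul_le_mul_of_nonneg_right h5 hrp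
    have hkey : r ^ (2 - μ) = r ^ (-(μ-1)) * r := by
      rw [show (2:ℝ) - μ = -(μ-1) + 1 by ring, Real.rpow_add hr0, Real.rpow_one]
    rw [div_le_iff₀ (by positivity : (0:ℝ) < (2-μ)*r)]
    calc (1 + r) ^ (2 - μ) - 1 ≤ 2 * r ^ (2 - μ) := by linarith
      _ = 2 * (r ^ (-(μ-1)) * r) := by rw [hkey]
      _ = 2/(2-μ) * r ^ (-(μ-1)) * ((2-μ)*r) := by field_simp

lemma tg_continuous (B : E3 → E3) (hBc : Continuous B) :
    Continuous (transversalGauge B) := by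
  have h1 : Continuous (Function.uncurry fun (x : E3) (s : ℝ) => s • B (s • x)) := by
    fun_prop
  have h2 : Continuous fun x : E3 => ∫ s in (0:ℝ)..1, s • B (s • x) :=
    intervalIntegral.continuous_parametric_intervalIntegral_of_continuous' h1 0 1
  exact (cross3_continuous continuous_id h2).neg

lemma tg_orth (B : E3 → E3) (x : E3) : dot3 x (transversalGauge B x) = 0 := by
  rw [transversalGauge]
  show (inner ℝ x (-(cross3 x _)) : ℝ) = 0
  rw [inner_neg_right]
  rw [show (inner ℝ x (cross3 x (∫ s in (0:ℝ)..1, s • B (s • x))) : ℝ)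
      = dot3 x (cross3 x (∫ s in (0:ℝ)..1, s • B (s • x))) from rfl, dot3_cross]
  simp

lemma normA_le (B : E3 → E3) (C μ : ℝ) (hC : 0 ≤ C) (hBc : Continuous B)
    (hbd : ∀ x : E3, ‖B x‖ ≤ C * (1 + ‖x‖) ^ (-μ)) (x : E3) (hx : 0 < ‖x‖) :
    ‖transversalGauge B x‖ ≤ 4 * C * ∫ s in (0:ℝ)..1, (1 + s * ‖x‖) ^ (1 - μ) := by
  set r := ‖x‖ with hr
  have hint1 : IntervalIntegrable (fun s : ℝ => ‖s • B (s • x)‖) volume 0 1 := by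
    apply Continuous.intervalIntegrable
    fun_prop
  have hint2 : IntervalIntegrable (fun s : ℝ => C * r⁻¹ * (1 + s * r) ^ (1 - μ)) volume 0 1 :=
    (intInt_pow r (1-μ) hx.le).const_mul _
  have hpt : ∀ s ∈ Set.Icc (0:ℝ) 1,
      ‖s • B (s • x)‖ ≤ C * r⁻¹ * (1 + s * r) ^ (1 - μ) := by
    intro s hs
    have hs0 := hs.1
    have hpos : 0 < 1 + s * r := by nlinarith
    have hn : ‖s • x‖ = s * r := by
      rw [norm_smul, Real.norm_eq_abs, abs_of_nonneg hs0]
    have h1 : ‖s • B (s • x)‖ = s * ‖B (s • x)‖ := by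
      rw [norm_smul, Real.norm_eq_abs, abs_of_nonneg hs0]
    rw [h1]
    have h2 : ‖B (s • x)‖ ≤ C * (1 + s * r) ^ (-μ) := by
      have := hbd (s • x); rwa [hn] at this
    have h3 : s * ‖B (s • x)‖ ≤ s * (C * (1 + s * r) ^ (-μ)) :=
      mul_le_mul_of_nonneg_left h2 hs0
    refine h3.trans ?_
    have hrpow : (1 + s * r) ^ (1 - μ) = (1 + s * r) * (1 + s * r) ^ (-μ) := by
      rw [show (1:ℝ) - μ = 1 + (-μ) by ring, Real.rpow_add hpos, Real.rpow_one]
    rw [hrpow]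
    have hpw : (0:ℝ) ≤ (1 + s * r) ^ (-μ) := (Real.rpow_pos_of_pos hpos _).le
    have hsle : s ≤ r⁻¹ * (1 + s * r) := by
      rw [le_inv_mul_iff₀ hx]
      nlinarith
    calc s * (C * (1 + s * r) ^ (-μ)) = C * (s * (1 + s * r) ^ (-μ)) := by ring
      _ ≤ C * (r⁻¹ * (1 + s * r) * (1 + s * r) ^ (-μ)) := by
          apply mul_le_mul_of_nonneg_left _ hC
          exact mul_le_mul_of_nonneg_right hsle hpw
      _ = C * r⁻¹ * ((1 + s * r) * (1 + s * r) ^ (-μ)) := by ring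
  have hv : ‖∫ s in (0:ℝ)..1, s • B (s • x)‖
      ≤ ∫ s in (0:ℝ)..1, C * r⁻¹ * (1 + s * r) ^ (1 - μ) := by
    refine (intervalIntegral.norm_integral_le_integral_norm (by norm_num)).trans ?_
    exact intervalIntegral.integral_mono_on (by norm_num) hint1 hint2 hpt
  have hA : ‖transversalGauge B x‖ ≤ 4 * (r * ‖∫ s in (0:ℝ)..1, s • B (s • x)‖) := by
    rw [transversalGauge, norm_neg]
    exact cross3_norm_le x _
  have hconst : ∫ s in (0:ℝ)..1, C * r⁻¹ * (1 + s * r) ^ (1 - μ)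
      = C * r⁻¹ * ∫ s in (0:ℝ)..1, (1 + s * r) ^ (1 - μ) :=
    intervalIntegral.integral_const_mul _ _
  have hJ0 : (0:ℝ) ≤ ∫ s in (0:ℝ)..1, (1 + s * r) ^ (1 - μ) := by
    apply intervalIntegral.integral_nonneg (by norm_num)
    intro s hs
    exact (Real.rpow_pos_of_pos (by nlinarith [hs.1] : (0:ℝ) < 1 + s * r) _).le
  calc ‖transversalGauge B x‖ ≤ 4 * (r * ‖∫ s in (0:ℝ)..1, s • B (s • x)‖) := hA
    _ ≤ 4 * (r * (C * r⁻¹ * ∫ s in (0:ℝ)..1, (1 + s * r) ^ (1 - μ))) := by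
        have := hv.trans_eq hconst
        have h4 : (0:ℝ) ≤ r := hx.le
        nlinarith [norm_nonneg (∫ s in (0:ℝ)..1, s • B (s • x))]
    _ = 4 * C * ∫ s in (0:ℝ)..1, (1 + s * r) ^ (1 - μ) := by
        field_simp

/-- Decay properties of the transversal gauge (Proposition Ptg.1). -/
theorem statement1 (B : E3 → E3) (C μ : ℝ) (hμ : 3/2 < μ)
    (hBc : Continuous B) (hBmd : IsMediumDecay B)
    (hbd : ∀ x : E3, ‖B x‖ ≤ C * (1 + ‖x‖) ^ (-μ)) :
    Continuous (transversalGauge B) ∧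
    (∀ x : E3, dot3 x (transversalGauge B x) = 0) ∧
    (∃ C' : ℝ, ∀ x : E3, 2 ≤ ‖x‖ →
      (2 < μ → ‖transversalGauge B x‖ ≤ C' * ‖x‖⁻¹) ∧
      (μ = 2 → ‖transversalGauge B x‖ ≤ C' * ‖x‖⁻¹ * Real.log ‖x‖) ∧
      (μ < 2 → ‖transversalGauge B x‖ ≤ C' * ‖x‖ ^ (-(μ - 1)))) ∧
    IsMediumRange (transversalGauge B) := by
  have hC : 0 ≤ C := by
    have h := hbd 0
    simpa using (norm_nonneg (B 0)).trans h
  set C' : ℝ := 4 * C * (2 / |μ - 2| + 2) with hC'def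
  have hC'0 : 0 ≤ C' := by
    apply mul_nonneg (by linarith)
    positivity
  -- the main decay estimates
  have htrio : ∀ x : E3, 2 ≤ ‖x‖ →
      (2 < μ → ‖transversalGauge B x‖ ≤ C' * ‖x‖⁻¹) ∧
      (μ = 2 → ‖transversalGauge B x‖ ≤ C' * ‖x‖⁻¹ * Real.log ‖x‖) ∧
      (μ < 2 → ‖transversalGauge B x‖ ≤ C' * ‖x‖ ^ (-(μ - 1))) := by
    intro x hx
    set r := ‖x‖ with hrdef
    have hr0 : (0:ℝ) < r := by linarith
    have hmain := normA_le B C μ hC hBc hbd x hr0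
    obtain ⟨hJ1, hJ2, hJ3⟩ := J_le r μ hμ hx
    refine ⟨?_, ?_, ?_⟩
    · intro h2
      have habs : |μ - 2| = μ - 2 := abs_of_pos (by linarith)
      have h6 : (0:ℝ) < (μ - 2)⁻¹ := inv_pos.mpr (by linarith)
      have hb := hmain.trans (by nlinarith [hJ1 h2] :
        4 * C * (∫ s in (0:ℝ)..1, (1 + s * r) ^ (1 - μ)) ≤ 4 * C * ((μ-2)⁻¹ * r⁻¹))
      refine hb.trans ?_
      rw [hC'def, habs]
      have hrinv : (0:ℝ) ≤ r⁻¹ := by positivity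
      have : 4 * C * (μ - 2)⁻¹ ≤ 4 * C * (2 / (μ - 2) + 2) := by
        have : (μ - 2)⁻¹ ≤ 2 / (μ - 2) + 2 := by
          rw [div_eq_mul_inv]
          nlinarith [h6]
        nlinarith
      nlinarith
    · intro h2
      subst h2
      have habs : |(2:ℝ) - 2| = 0 := by norm_num
      have hC'eq : C' = 8 * C := by rw [hC'def, habs]; norm_num; ring
      have hb := hmain.trans (by nlinarith [hJ2 rfl] :
        4 * C * (∫ s in (0:ℝ)..1, (1 + s * r) ^ (1 - (2:ℝ))) ≤ 4 * C * (2 * r⁻¹ * Real.log r))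
      refine hb.trans ?_
      rw [hC'eq]
      nlinarith [Real.log_nonneg (by linarith : (1:ℝ) ≤ r), inv_nonneg.mpr hr0.le]
    · intro h2
      have habs : |μ - 2| = 2 - μ := by rw [abs_of_neg (by linarith : μ - 2 < 0)]; ring
      have h2μ : (0:ℝ) < 2 - μ := by linarith
      have hb := hmain.trans (by nlinarith [hJ3 h2] :
        4 * C * (∫ s in (0:ℝ)..1, (1 + s * r) ^ (1 - μ)) ≤ 4 * C * (2/(2-μ) * r ^ (-(μ-1))))
      refine hb.trans ?_
      rw [hC'def, habs]
      have hrp : (0:ℝ) ≤ r ^ (-(μ-1)) := (Real.rpow_pos_of_pos hr0 _).le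
      have : 4 * C * (2/(2-μ)) ≤ 4 * C * (2 / (2 - μ) + 2) := by nlinarith
      nlinarith
  refine ⟨tg_continuous B hBc, tg_orth B, ⟨C', htrio⟩, ?_⟩
  -- IsMediumRange
  refine ⟨tg_continuous B hBc, ?_, ?_⟩
  · -- decay with a single exponent
    set ν : ℝ := min (μ - 1) 1 with hνdef
    have hν1 : 1/2 < ν := by
      rw [hνdef]; exact lt_min (by linarith) (by norm_num)
    have hν2 : ν ≤ 1 := min_le_right _ _
    set μ' : ℝ := (1/2 + ν)/2 with hμ'def
    have hμ'1 : 1/2 < μ' := by rw [hμ'def]; linarith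
    have hμ'2 : μ' < ν := by rw [hμ'def]; linarith
    have hμ'3 : μ' ≤ 1 := by linarith
    refine ⟨4 * (C' + 1), by positivity, μ', hμ'1, 2, fun x hx => ?_⟩
    set r := ‖x‖ with hrdef
    have hr0 : (0:ℝ) < r := by linarith
    have hr1 : (1:ℝ) ≤ r := by linarith
    have hrp : (0:ℝ) < r ^ (-μ') := Real.rpow_pos_of_pos hr0 _
    obtain ⟨ht1, ht2, ht3⟩ := htrio x hx
    rcases lt_trichotomy μ 2 with hlt | heq | hgt
    · -- μ < 2, so ν = μ - 1
      have hνeq : ν = μ - 1 := by rw [hνdef]; exact min_eq_left (by linarith)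
      have hmono : r ^ (-(μ - 1)) ≤ r ^ (-μ') :=
        Real.rpow_le_rpow_of_exponent_le hr1 (by rw [← hνeq]; linarith)
      calc ‖transversalGauge B x‖ ≤ C' * r ^ (-(μ - 1)) := ht3 hlt
        _ ≤ (4 * (C' + 1)) * r ^ (-μ') := by nlinarith
    · -- μ = 2
      have hνeq : ν = 1 := by rw [hνdef, heq]; norm_num
      have hμ'eq : μ' = 3/4 := by rw [hμ'def, hνeq]; norm_num
      have hlogle : Real.log r ≤ 4 * r ^ ((1:ℝ)/4) := by
        have := Real.log_le_rpow_div hr0.le (by norm_num : (0:ℝ) < 1/4)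
        calc Real.log r ≤ r ^ ((1:ℝ)/4) / (1/4) := this
          _ = 4 * r ^ ((1:ℝ)/4) := by ring
      have hrpow : r⁻¹ * r ^ ((1:ℝ)/4) = r ^ (-μ') := by
        rw [hμ'eq, ← Real.rpow_neg_one r, ← Real.rpow_add hr0]
        norm_num
      have hlog0 : 0 ≤ Real.log r := Real.log_nonneg hr1
      have hq : (0:ℝ) < r ^ ((1:ℝ)/4) := Real.rpow_pos_of_pos hr0 _
      calc ‖transversalGauge B x‖ ≤ C' * r⁻¹ * Real.log r := ht2 heq
        _ ≤ C' * r⁻¹ * (4 * r ^ ((1:ℝ)/4)) := by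
            apply mul_le_mul_of_nonneg_left hlogle
            positivity
        _ = 4 * C' * (r⁻¹ * r ^ ((1:ℝ)/4)) := by ring
        _ = 4 * C' * r ^ (-μ') := by rw [hrpow]
        _ ≤ (4 * (C' + 1)) * r ^ (-μ') := by nlinarith
    · -- 2 < μ
      have hmono : r ^ (-(1:ℝ)) ≤ r ^ (-μ') :=
        Real.rpow_le_rpow_of_exponent_le hr1 (by linarith)
      have hrinv : r⁻¹ = r ^ (-(1:ℝ)) := (Real.rpow_neg_one r).symm
      calc ‖transversalGauge B x‖ ≤ C' * r⁻¹ := ht1 hgt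
        _ = C' * r ^ (-(1:ℝ)) := by rw [hrinv]
        _ ≤ (4 * (C' + 1)) * r ^ (-μ') := by nlinarith [Real.rpow_pos_of_pos hr0 (-(1:ℝ))]
  · -- longitudinal decay: the longitudinal component vanishes identically
    have h0 : ∀ r : ℝ, (⨆ x ∈ {x : E3 | r ≤ ‖x‖},
        ENNReal.ofReal (|dot3 (transversalGauge B x) x| / ‖x‖)) = 0 := by
      intro r
      refine le_antisymm ?_ zero_le
      refine iSup₂_le fun x hx => ?_
      rw [dot3_comm, tg_orth B x]
      simp
    rw [LongitudinalIntegrableDecay]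
    calc (∫⁻ r in Set.Ioi (0:ℝ), ⨆ x ∈ {x : E3 | r ≤ ‖x‖},
          ENNReal.ofReal (|dot3 (transversalGauge B x) x| / ‖x‖))
        = ∫⁻ _ in Set.Ioi (0:ℝ), 0 := by
          apply lintegral_congr
          intro r
          exact h0 r
      _ = 0 := lintegral_zero
      _ < ⊤ := by simp
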